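/- Let u be an extended odometer on [0,n] stable on [1,n−1] with u(0) ≥ 0 and u(n) ≥ 0, and let f_v = R_u(v) − L_u(v+1). Suppose there exists k such that f_v ≤ 0 for 0 ≤ v < k and f_v ≥ 1 for k ≤ v ≤ n. Then u(v) ≥ 0 for all v ∈ [0,n]. -/

import Mathlib

/-- ARW instructions. -/
inductive Instr : Type
  | left
  | right
  | sleep
deriving DecidableEq

/-- Signed count of `left` instructions executed at site `v` by the extended
odometer `u`. -/
noncomputable def Lcount (instr : ℤ → ℤ → Instr) (u : ℤ → ℤ) (v : ℤ) : ℤ :=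
  if 0 ≤ u v then
    (((Finset.Icc 1 (u v)).filter fun i => instr v i = Instr.left).card : ℤ)
  else
    -((((Finset.Icc (u v + 1) 0).filter fun i => instr v i = Instr.left).card : ℤ))

/-- Signed count of `right` instructions executed at site `v` by `u`. -/
noncomputable def Rcount (instr : ℤ → ℤ → Instr) (u : ℤ → ℤ) (v : ℤ) : ℤ :=
  if 0 ≤ u v then
    (((Finset.Icc 1 (u v)).filter fun i => instr v i = Instr.right).card : ℤ)
  else
    -((((Finset.Icc (u v + 1) 0).filter fun i => instr v i = Instr.right).card : ℤ))

/-- The number of particles left at `v` by the extended odometer `u`. -/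
noncomputable def height (instr : ℤ → ℤ → Instr) (σ : ℤ → ℕ) (u : ℤ → ℤ) (v : ℤ) : ℤ :=
  (σ v : ℤ) + Rcount instr u (v - 1) + Lcount instr u (v + 1)
    - Lcount instr u v - Rcount instr u v

/-- Stability of the extended odometer `u` at site `v`. -/
def StableAt (instr : ℤ → ℤ → Instr) (σ : ℤ → ℕ) (u : ℤ → ℤ) (v : ℤ) : Prop :=
  (height instr σ u v = 0 ∨ height instr σ u v = 1) ∧
    (height instr σ u v = 1 ↔ instr v (u v) = Instr.sleep)


lemma Lcount_nonneg' (instr : ℤ → ℤ → Instr) (u : ℤ → ℤ) (v : ℤ) (h : 0 ≤ u v) :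
    0 ≤ Lcount instr u v := by
  simp only [Lcount, if_pos h]; positivity

lemma Rcount_nonneg' (instr : ℤ → ℤ → Instr) (u : ℤ → ℤ) (v : ℤ) (h : 0 ≤ u v) :
    0 ≤ Rcount instr u v := by
  simp only [Rcount, if_pos h]; positivity

lemma Rcount_nonpos' (instr : ℤ → ℤ → Instr) (u : ℤ → ℤ) (v : ℤ) (h : u v ≤ 0) :
    Rcount instr u v ≤ 0 := by
  unfold Rcount
  by_cases h0 : 0 ≤ u v
  · have : u v = 0 := le_antisymm h h0
    simp [this]
  · rw [if_neg h0]
    simp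

lemma Lcount_neg' (instr : ℤ → ℤ → Instr)
    (hinstr0 : ∀ v, instr v 0 = Instr.left) (u : ℤ → ℤ) (v : ℤ) (h : u v < 0) :
    Lcount instr u v ≤ -1 := by
  unfold Lcount
  rw [if_neg (not_le.mpr h)]
  have hmem : (0 : ℤ) ∈ (Finset.Icc (u v + 1) 0).filter fun i => instr v i = Instr.left := by
    simp [Finset.mem_filter, Finset.mem_Icc, hinstr0, Int.add_one_le_iff, h]
  have : 1 ≤ ((Finset.Icc (u v + 1) 0).filter fun i => instr v i = Instr.left).card :=
    Finset.card_pos.mpr ⟨0, hmem⟩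
  omega

/-- Lemma 7.3 (`lem:uniflow`): let `u` be an extended odometer on `[0,n]` stable
on `[1,n-1]` with `u 0 ≥ 0` and `u n ≥ 0`, and let `f v = R_u(v) − L_u(v+1)`.
If there is `k` with `f v ≤ 0` for `0 ≤ v < k` and `f v ≥ 1` for `k ≤ v ≤ n`,
then `u v ≥ 0` for all `v ∈ [0,n]`. -/
theorem odometer_nonneg_of_uniflow (instr : ℤ → ℤ → Instr)
    (hinstr0 : ∀ v, instr v 0 = Instr.left)
    (σ : ℤ → ℕ) (n : ℤ) (u : ℤ → ℤ)
    (hsupp : ∀ v : ℤ, v ∉ Finset.Icc (0 : ℤ) n → u v = 0)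
    (hstable : ∀ v ∈ Finset.Icc (1 : ℤ) (n - 1), StableAt instr σ u v)
    (hu0 : 0 ≤ u 0) (hun : 0 ≤ u n)
    (f : ℤ → ℤ) (hf : ∀ v, f v = Rcount instr u v - Lcount instr u (v + 1))
    (k : ℤ)
    (hneg : ∀ v : ℤ, 0 ≤ v → v < k → f v ≤ 0)
    (hpos : ∀ v : ℤ, k ≤ v → v ≤ n → 1 ≤ f v) :
    ∀ v ∈ Finset.Icc (0 : ℤ) n, 0 ≤ u v := by
  -- Claim A: if u v ≤ 0 and k ≤ v ≤ n then u (v+1) < 0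
  have claimA : ∀ v : ℤ, k ≤ v → v ≤ n → u v ≤ 0 → u (v + 1) < 0 := by
    intro v hk hn hle
    by_contra hge
    push_neg at hge
    have h1 := hpos v hk hn
    rw [hf v] at h1
    have h2 := Rcount_nonpos' instr u v hle
    have h3 := Lcount_nonneg' instr u (v + 1) hge
    omega
  -- Claim B: if u v < 0 and 0 ≤ v - 1 < k then u (v-1) < 0
  have claimB : ∀ v : ℤ, 0 ≤ v - 1 → v - 1 < k → u v < 0 → u (v - 1) < 0 := by
    intro v h0 hk hlt
    by_contra hge
    push_neg at hge
    have h1 := hneg (v - 1) h0 hk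
    rw [hf (v - 1)] at h1
    have h2 := Rcount_nonneg' instr u (v - 1) hge
    have h3 := Lcount_neg' instr hinstr0 u v hlt
    have : v - 1 + 1 = v := by ring
    rw [this] at h1
    omega
  -- Forward induction: if u v < 0 with k ≤ v ≤ n, contradiction
  have forward : ∀ m : ℕ, ∀ v : ℤ, k ≤ v → v ≤ n → n - v = (m : ℤ) → u v < 0 → False := by
    intro m
    induction m with
    | zero => intro v _ _ hm hlt; have : v = n := by omega
              rw [this] at hlt; omega
    | succ m ih =>
        intro v hk hn hm hlt
        have h1 : u (v + 1) < 0 := claimA v hk hn (le_of_lt hlt)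
        exact ih (v + 1) (by omega) (by omega) (by push_cast at hm ⊢; omega) h1
  -- Backward induction: if u v < 0 with 0 ≤ v < k, contradiction
  have backward : ∀ m : ℕ, ∀ v : ℤ, 0 ≤ v → v < k → v = (m : ℤ) → u v < 0 → False := by
    intro m
    induction m with
    | zero => intro v _ _ hm hlt; rw [hm] at hlt; norm_num at hlt; omega
    | succ m ih =>
        intro v h0 hk hm hlt
        have h1 : u (v - 1) < 0 := claimB v (by push_cast at hm; omega) (by omega) hlt
        exact ih (v - 1) (by push_cast at hm; omega) (by omega) (by push_cast at hm ⊢; omega) h1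
  intro v hv
  rw [Finset.mem_Icc] at hv
  by_contra hlt
  push_neg at hlt
  by_cases hvk : v < k
  · exact backward v.toNat v hv.1 hvk (by omega) hlt
  · push_neg at hvk
    exact forward (n - v).toNat v hvk hv.2 (by omega) hlt
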